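/- Let X be the 2×2 phase family α_X(a,b) = (a/2)·[[1+b, 1−b],[1−b, 1+b]] and Z the phase family α_Z(a,b) = a·diag(1,b). The compatibility condition c·[[1+d,1−d],[1−d,1+d]]·(a/2)·diag(1,b) = (1/a)·diag(1,1/b)·(2/c)·[[1+1/d,1−1/d],[1−1/d,1+1/d]] (with a,b,c,d ∈ ℂ*) holds if and only if one of: (d = −1 and a²c²b = 4), (d = 1, a²c² = 4, and b² = 1), or (b = −1 and d·a²c² = 4). -/

import Mathlib

set_option maxHeartbeats 1000000

open Matrix

/-- Compatibility of the phase-shifted `Z`/`X` Frobenius structures. -/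
theorem stmt14 (a b c d : ℂ) (ha : a ≠ 0) (hb : b ≠ 0) (hc : c ≠ 0) (hd : d ≠ 0) :
    (c • !![1 + d, 1 - d; 1 - d, 1 + d]) * ((a / 2) • !![(1 : ℂ), 0; 0, b])
      = (a⁻¹ • !![(1 : ℂ), 0; 0, b⁻¹]) *
        ((2 / c) • !![1 + d⁻¹, 1 - d⁻¹; 1 - d⁻¹, 1 + d⁻¹]) ↔
    ((d = -1 ∧ a ^ 2 * c ^ 2 * b = 4) ∨
     (d = 1 ∧ a ^ 2 * c ^ 2 = 4 ∧ b ^ 2 = 1) ∨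
     (b = -1 ∧ d * a ^ 2 * c ^ 2 = 4)) := by
  rw [← Matrix.ext_iff]
  constructor
  · intro h
    have h11 := h 0 0
    have h12 := h 0 1
    have h22 := h 1 1
    simp [Matrix.mul_apply, Fin.sum_univ_two] at h11 h12 h22
    field_simp at h11 h12 h22
    by_cases hdn : d = -1
    · subst hdn
      exact Or.inl ⟨rfl, by linear_combination -h12/2⟩
    · have hd1 : d + 1 ≠ 0 := fun h => hdn (by linear_combination h)
      have h1 : a ^ 2 * c ^ 2 * d = 4 := by
        have hf : (d + 1) * (a ^ 2 * c ^ 2 * d - 4) = 0 := by linear_combination h11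
        rcases mul_eq_zero.mp hf with h' | h'
        · exact absurd h' hd1
        · linear_combination h'
      have hb2 : b ^ 2 = 1 := by
        have hf : (d + 1) * (b ^ 2 - 1) = 0 := by
          linear_combination (h22 - (d + 1) * b ^ 2 * h1) / 4
        rcases mul_eq_zero.mp hf with h' | h'
        · exact absurd h' hd1
        · linear_combination h'
      have hf : (1 - d) * (b + 1) = 0 := by
        linear_combination (h12 - b * (1 - d) * h1) / 4
      rcases mul_eq_zero.mp hf with h' | h'
      · have hd' : d = 1 := by linear_combination -h'
        subst hd'
        exact Or.inr (Or.inl ⟨rfl, by linear_combination h1, hb2⟩)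
      · have hb' : b = -1 := by linear_combination h'
        exact Or.inr (Or.inr ⟨hb', by linear_combination h1⟩)
  · rintro (⟨rfl, h⟩ | ⟨rfl, h, hb2⟩ | ⟨rfl, h⟩) <;> intro i j <;> fin_cases i <;> fin_cases j <;>
      simp [Matrix.mul_apply, Fin.sum_univ_two] <;> (try norm_num) <;> field_simp <;>
      first
        | rfl
        | linear_combination 2 * h
        | linear_combination -2 * h
        | linear_combination h
        | linear_combination 2 * b ^ 2 * h + 8 * hb2
        | linear_combination b ^ 2 * h + 4 * hb2
        | linear_combination (1 + d) * h
        | linear_combination -(1 + d) * h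
        | linear_combination (1 - d) * h
        | linear_combination (d - 1) * h
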